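/- Let X_n = (X_{i,n})_{i=1}^n be i.i.d. ℝ^d-valued random vectors under each P ∈ 𝒫_n, and suppose there exist numbers c_L < c_U, ε > 0, and a coordinate j ∈ {1,…,d} such that the j-th entry X_{ij,n} of X_{i,n} satisfies P{X_{ij,n} = c_L} > ε and P{X_{ij,n} = c_U} > ε for all P ∈ 𝒫_n. Then for any R > 0 there exists c_R > 0 such that for all n ≥ 1 and all P ∈ 𝒫_n: c_R ≤ sup_{t∈ℝ^d:‖t‖>R} (1/(2π²)) E_P[inf_{q∈ℤ}(t'(X_{1,n}−X_{2,n})−2πq)²]. -/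

import Mathlib

open MeasureTheory ProbabilityTheory Real
open scoped BigOperators ENNReal NNReal

noncomputable section

/-- Euclidean space ℝ^d. -/
abbrev Ed (d : ℕ) := EuclideanSpace ℝ (Fin d)

variable {d : ℕ}

/-- The characteristic function of a (Borel) measure on ℝ^d. -/
def charFn (μ : Measure (Ed d)) (t : Ed d) : ℂ :=
  ∫ x, Complex.exp (((inner ℝ t x : ℝ) : ℂ) * Complex.I) ∂μ

/-- Partial derivative in the k-th coordinate direction. -/
def partialD {F : Type*} [NormedAddCommGroup F] [NormedSpace ℝ F]
    (k : Fin d) (f : Ed d → F) : Ed d → F :=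
  fun x => fderiv ℝ f x (EuclideanSpace.single k 1)

/-- Iterated partial derivative `D^ν` for a multi-index ν. -/
def mDeriv {F : Type*} [NormedAddCommGroup F] [NormedSpace ℝ F]
    (ν : Fin d → ℕ) (f : Ed d → F) : Ed d → F :=
  (List.finRange d).foldr (fun k g => (partialD k)^[ν k] g) f

/-- The ν-th cumulant of a measure μ on ℝ^d:
`κ_ν = (−i)^{|ν|} D^ν (log φ_μ)(0)` where φ_μ is the characteristic function. -/
def cumulant (μ : Measure (Ed d)) (ν : Fin d → ℕ) : ℂ :=
  (-Complex.I) ^ (∑ k, ν k) * mDeriv ν (fun t => Complex.log (charFn μ t)) 0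

/-- The finite set of multi-indices ν ∈ ℤ₊^d with |ν| = j. -/
def multiIdx (d j : ℕ) : Finset (Fin d → ℕ) :=
  (Fintype.piFinset fun _ : Fin d => Finset.range (j + 1)).filter fun ν => ∑ k, ν k = j

/-- The differential operator `χ̄_j(−D)` applied to f, where
`χ̄_j(z) = j! Σ_{|ν|=j} (χ_ν/ν!) z^ν`. -/
def chiOpApply (χ : (Fin d → ℕ) → ℂ) (j : ℕ) (f : Ed d → ℂ) : Ed d → ℂ :=
  fun x => (j.factorial : ℂ) * (-1 : ℂ) ^ j *
    ∑ ν ∈ multiIdx d j, (χ ν / ∏ k, ((ν k).factorial : ℂ)) * mDeriv ν f x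

/-- The Edgeworth polynomial operator `P̃_j(−D; {χ_ν})` applied to f:
`P̃_j = Σ_{m=1}^{j} (1/m!) Σ*_{j_1+⋯+j_m=j} ∏_k χ̄_{j_k+2}(−D)/(j_k+2)!`,
encoded as a sum over compositions of j. -/
def edgeworthOp (χ : (Fin d → ℕ) → ℂ) (j : ℕ) (f : Ed d → ℂ) : Ed d → ℂ :=
  fun x => ∑ c : Composition j, ((c.length.factorial : ℂ))⁻¹ *
    (c.blocks.foldr
      (fun jk g => fun y => (((jk + 2).factorial : ℂ))⁻¹ * chiOpApply χ (jk + 2) g y) f) x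

/-- The standard normal density on ℝ^d. -/
def gaussDensity (d : ℕ) (x : Ed d) : ℝ :=
  (2 * π) ^ (-(d : ℝ) / 2) * Real.exp (-‖x‖ ^ 2 / 2)

/-- The density of the order-s Edgeworth signed measure
`Σ_{j=0}^{s−2} n^{−j/2} P̃_j(−D;{χ_ν}) φ(x)`. -/
def edgeworthDensity (χ : (Fin d → ℕ) → ℂ) (n s : ℕ) (x : Ed d) : ℝ :=
  (∑ j ∈ Finset.range (s - 1), (((n : ℝ) ^ (-(j : ℝ) / 2) : ℝ) : ℂ) *
    edgeworthOp χ j (fun y => ((gaussDensity d y : ℝ) : ℂ)) x).re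

/-- The order-s Edgeworth signed measure, as a set function `A ↦ ∫_A (density)`. -/
def edgeworthSM (χ : (Fin d → ℕ) → ℂ) (n s : ℕ) (A : Set (Ed d)) : ℝ :=
  ∫ x in A, edgeworthDensity χ n s x

/-- The standard normal distribution Φ = N(0, I_d) on ℝ^d. -/
def stdGaussian (d : ℕ) : Measure (Ed d) :=
  volume.withDensity fun x => ENNReal.ofReal (gaussDensity d x)

/-- Modulus of continuity `ω_f(x;ε) = sup {|f z − f y| : z,y ∈ B(x;ε)}`. -/
def oscil (f : Ed d → ℝ) (x : Ed d) (ε : ℝ) : ℝ :=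
  sSup {r | ∃ z ∈ Metric.ball x ε, ∃ y ∈ Metric.ball x ε, r = |f z - f y|}

/-- Averaged modulus of continuity `ω̄_f(ε;μ) = ∫ ω_f(x;ε) dμ(x)`. -/
def oscilBar (f : Ed d → ℝ) (ε : ℝ) (μ : Measure (Ed d)) : ℝ :=
  ∫ x, oscil f x ε ∂μ

/-- `M_s(f) = sup_x |f(x)|/(1+‖x‖^s)`. -/
def Msup (s : ℕ) (f : Ed d → ℝ) : ℝ := ⨆ x : Ed d, |f x| / (1 + ‖x‖ ^ s)

/-- The (uncentered) second-moment matrix `E[X X']` of a measure on ℝ^d. -/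
def covMat (μ : Measure (Ed d)) : Matrix (Fin d) (Fin d) ℝ :=
  Matrix.of fun k l => ∫ x, x k * x l ∂μ

open Classical in
/-- Inverse square root of a matrix (junk value if not positive semidefinite). -/
def matInvSqrt (M : Matrix (Fin d) (Fin d) ℝ) : Matrix (Fin d) (Fin d) ℝ :=
  if h : M.PosSemidef then ((h.1.eigenvectorUnitary : Matrix (Fin d) (Fin d) ℝ) * Matrix.diagonal (fun i => Real.sqrt (h.1.eigenvalues i)) *
      (star h.1.eigenvectorUnitary : Matrix (Fin d) (Fin d) ℝ))⁻¹ else 1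

open Classical in
/-- Square root of a matrix (junk value if not positive semidefinite). -/
def matSqrt (M : Matrix (Fin d) (Fin d) ℝ) : Matrix (Fin d) (Fin d) ℝ :=
  if h : M.PosSemidef then (h.1.eigenvectorUnitary : Matrix (Fin d) (Fin d) ℝ) * Matrix.diagonal (fun i => Real.sqrt (h.1.eigenvalues i)) *
      (star h.1.eigenvectorUnitary : Matrix (Fin d) (Fin d) ℝ) else 1

/-- Matrix-vector multiplication on Euclidean space. -/
def mulVecE (M : Matrix (Fin d) (Fin d) ℝ) (x : Ed d) : Ed d :=
  (EuclideanSpace.equiv (Fin d) ℝ).symm (M.mulVec (EuclideanSpace.equiv (Fin d) ℝ x))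

/-- Marginal distribution of the i-th coordinate. -/
def marginal {n : ℕ} (P : Measure (Fin n → Ed d)) (i : Fin n) : Measure (Ed d) :=
  P.map fun ω => ω i

/-- `V_{n,P} = (1/n) Σ_i Var_P(X_{i,n})` (for mean-zero coordinates). -/
def Vmat {d : ℕ} (n : ℕ) (P : Measure (Fin n → Ed d)) : Matrix (Fin d) (Fin d) ℝ :=
  (n : ℝ)⁻¹ • ∑ i : Fin n, covMat (marginal P i)

/-- `Q_{n,P}`, the distribution of `n^{−1/2} Σ_i V_{n,P}^{−1/2} X_{i,n}`. -/
def Qmeas {d : ℕ} (n : ℕ) (P : Measure (Fin n → Ed d)) : Measure (Ed d) :=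
  P.map fun ω => (Real.sqrt n)⁻¹ • ∑ i, mulVecE (matInvSqrt (Vmat n P)) (ω i)

/-- `χ̄_{ν,P}`, the average over i of the ν-th cumulant of `V_{n,P}^{−1/2} X_{i,n}`. -/
def chiBar {d : ℕ} (n : ℕ) (P : Measure (Fin n → Ed d)) (ν : Fin d → ℕ) : ℂ :=
  (n : ℂ)⁻¹ * ∑ i : Fin n, cumulant ((marginal P i).map (mulVecE (matInvSqrt (Vmat n P)))) ν

/-- `ρ_{n,s,P} = (1/n) Σ_i E_P ‖X_{i,n}‖^s`. -/
def rhoM {d : ℕ} (n s : ℕ) (P : Measure (Fin n → Ed d)) : ℝ :=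
  (n : ℝ)⁻¹ * ∑ i : Fin n, ∫ ω, ‖ω i‖ ^ s ∂P

/-- The mean weak Cramér condition with parameter (b,c,R) for a collection of
joint distributions of (X_{i,n})_{i=1}^n. -/
def meanWeakCramer {d : ℕ} {n : ℕ} (Ps : Set (Measure (Fin n → Ed d))) (b c R : ℝ) : Prop :=
  ∀ P ∈ Ps, ∀ t : Ed d, R < ‖t‖ →
    (n : ℝ)⁻¹ * ∑ i : Fin n, ‖charFn (marginal P i) t‖ ≤ 1 - c / ‖t‖ ^ b

/-- The weak Cramér condition with parameter (b,c,R) for a single distribution. -/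
def weakCramerMeas (μ : Measure (Ed d)) (b c R : ℝ) : Prop :=
  ∀ t : Ed d, R < ‖t‖ → ‖charFn μ t‖ ≤ 1 - c / ‖t‖ ^ b

/-- The empirical (resampling) measure `(1/n) Σ_j δ_{x_j}`. -/
def empMeas {d n : ℕ} (x : Fin n → Ed d) : Measure (Ed d) :=
  ((n : ℝ≥0∞))⁻¹ • ∑ i : Fin n, Measure.dirac (x i)

/-- Sample mean. -/
def sMean {d n : ℕ} (x : Fin n → Ed d) : Ed d := (n : ℝ)⁻¹ • ∑ i, x i

/-- Sample covariance matrix `V̂_n`. -/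
def Vhat {d n : ℕ} (x : Fin n → Ed d) : Matrix (Fin d) (Fin d) ℝ :=
  (n : ℝ)⁻¹ • ∑ i : Fin n, Matrix.of fun k l => (x i k - sMean x k) * (x i l - sMean x l)

/-- The bootstrap distribution `Q_{n,ℱ_n}`: the conditional distribution, given the
sample x, of `√n V̂_n^{−1/2}(X̄* − X̄)` where `X̄*` is the mean of n i.i.d. draws from
the empirical measure of x. -/
def bootQ {d n : ℕ} (x : Fin n → Ed d) : Measure (Ed d) :=
  (Measure.pi fun _ : Fin n => empMeas x).map
    fun y => Real.sqrt n • mulVecE (matInvSqrt (Vhat x)) (sMean y - sMean x)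

/-- `χ*_ν`, the ν-th cumulant of the conditional distribution of a bootstrap draw
given the sample, i.e. of the empirical measure. -/
def bootChi {d n : ℕ} (x : Fin n → Ed d) (ν : Fin d → ℕ) : ℂ := cumulant (empMeas x) ν

/-- `Q̃_{n,ℱ_n}`, the Edgeworth signed measure built from the bootstrap cumulants. -/
def bootQtilde {d n : ℕ} (s : ℕ) (x : Fin n → Ed d) (A : Set (Ed d)) : ℝ :=
  edgeworthSM (bootChi x) n s A

/-- Event `ℰ_{n,0}(ρ̄) = {(1/n) Σ ‖X_i‖^s ≤ ρ̄}`. -/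
def Ev0 {d : ℕ} (n s : ℕ) (ρ : ℝ) : Set (Fin n → Ed d) :=
  {x | (n : ℝ)⁻¹ * ∑ i, ‖x i‖ ^ s ≤ ρ}

/-- Event `ℰ_{n,1}(c₁) = {smallest eigenvalue of V̂_n ≥ c₁}` (via the quadratic form). -/
def Ev1 {d : ℕ} (n : ℕ) (c₁ : ℝ) : Set (Fin n → Ed d) :=
  {x | ∀ v : Ed d, c₁ * ‖v‖ ^ 2 ≤ (inner ℝ v (mulVecE (Vhat x) v) : ℝ)}

/-- Event `ℰ_{n,2}(c₂)`: all mixed absolute moments of the sample of order ≤ s are ≤ c₂. -/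
def Ev2 {d : ℕ} (n s : ℕ) (c₂ : ℝ) : Set (Fin n → Ed d) :=
  {x | ∀ v : Fin d → ℕ, (∑ k, v k) ≤ s → (n : ℝ)⁻¹ * ∑ i, ∏ k, |x i k| ^ (v k) ≤ c₂}

/-- `ξ(u,v;t) = inf_{q∈ℤ} (t'(u−v) − 2πq)²`. -/
def xiFn {d : ℕ} (t u v : Ed d) : ℝ := ⨅ q : ℤ, ((inner ℝ t (u - v) : ℝ) - 2 * π * (q : ℝ)) ^ 2

/-- Condition (★): `c_R ≤ sup_{‖t‖>R} (1/(2π²)) E_P[inf_q (t'(X₁−X₂) − 2πq)²]`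
for X₁, X₂ i.i.d. with distribution P. -/
def condStar {d : ℕ} (P : Measure (Ed d)) (R cR : ℝ) : Prop :=
  cR ≤ ⨆ t : {t : Ed d // R < ‖t‖},
    (2 * π ^ 2)⁻¹ * ∫ p : Ed d × Ed d, xiFn t.1 p.1 p.2 ∂(P.prod P)


lemma xiFn_nonneg' {d : ℕ} (t u v : Ed d) : 0 ≤ xiFn t u v :=
  le_ciInf fun _ => sq_nonneg _

lemma xiFn_le_pi_sq' {d : ℕ} (t u v : Ed d) : xiFn t u v ≤ π ^ 2 := by
  set b : ℝ := (inner ℝ t (u - v) : ℝ)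
  have hb : BddBelow (Set.range fun q : ℤ => (b - 2 * π * (q : ℝ)) ^ 2) :=
    ⟨0, by rintro r ⟨q, rfl⟩; exact sq_nonneg _⟩
  refine (ciInf_le hb (round (b / (2 * π)))).trans ?_
  have hπ : (2 * π) ≠ 0 := by positivity
  have h1 : |b / (2 * π) - round (b / (2 * π))| ≤ 1 / 2 := abs_sub_round _
  have h2 : b - 2 * π * (round (b / (2 * π)) : ℝ)
      = (2 * π) * (b / (2 * π) - (round (b / (2 * π)) : ℝ)) := by field_simp
  rw [h2, mul_pow]
  have h3 : (b / (2 * π) - (round (b / (2 * π)) : ℝ)) ^ 2 ≤ (1 / 2) ^ 2 :=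
    sq_le_sq' (neg_le_of_abs_le h1) (le_of_abs_le h1)
  calc (2 * π) ^ 2 * (b / (2 * π) - (round (b / (2 * π)) : ℝ)) ^ 2
      ≤ (2 * π) ^ 2 * (1 / 2) ^ 2 := mul_le_mul_of_nonneg_left h3 (sq_nonneg _)
    _ = π ^ 2 := by ring

lemma xiFn_measurable' {d : ℕ} (t : Ed d) :
    Measurable fun p : Ed d × Ed d => xiFn t p.1 p.2 := by
  apply Measurable.iInf
  intro q
  have : Continuous fun p : Ed d × Ed d => ((inner ℝ t (p.1 - p.2) : ℝ) - 2 * π * (q : ℝ)) ^ 2 :=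
    ((continuous_const.inner (continuous_fst.sub continuous_snd)).sub continuous_const).pow 2
  exact this.measurable

lemma xiFn_integral_le {d : ℕ} (t : Ed d) (μ : Measure (Ed d × Ed d))
    [IsProbabilityMeasure μ] : ∫ p : Ed d × Ed d, xiFn t p.1 p.2 ∂μ ≤ π ^ 2 := by
  have h := norm_integral_le_of_norm_le_const (μ := μ)
    (f := fun p : Ed d × Ed d => xiFn t p.1 p.2) (C := π ^ 2) ?_
  · calc ∫ p : Ed d × Ed d, xiFn t p.1 p.2 ∂μ
        ≤ ‖∫ p : Ed d × Ed d, xiFn t p.1 p.2 ∂μ‖ := le_abs_self _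
      _ ≤ π ^ 2 * (μ Set.univ).toReal := h
      _ = π ^ 2 := by simp
  · filter_upwards with p
    rw [Real.norm_eq_abs, abs_of_nonneg (xiFn_nonneg' t p.1 p.2)]
    exact xiFn_le_pi_sq' t p.1 p.2

/-- **Proposition 3.2(i).** If each `P ∈ 𝒫ₙ` gives mass more than ε to two distinct point
values c_L < c_U of some coordinate j, then condition (★) holds for some `c_R > 0`: for
all `n ≥ 1` and all `P ∈ 𝒫ₙ`,
`c_R ≤ sup_{‖t‖>R} (1/(2π²)) E_P[inf_{q∈ℤ}(t'(X₁−X₂) − 2πq)²]`. -/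
theorem condStar_of_two_atoms
    (d : ℕ) (hd : 1 ≤ d)
    (Ps : ℕ → Set (Measure (Ed d)))
    (hprob : ∀ n, ∀ P ∈ Ps n, IsProbabilityMeasure P)
    (cL cU ε : ℝ) (hLU : cL < cU) (hε : 0 < ε) (j : Fin d)
    (hatomL : ∀ n, 1 ≤ n → ∀ P ∈ Ps n, ε < (P {x : Ed d | x j = cL}).toReal)
    (hatomU : ∀ n, 1 ≤ n → ∀ P ∈ Ps n, ε < (P {x : Ed d | x j = cU}).toReal)
    (R : ℝ) (hR : 0 < R) :
    ∃ cR : ℝ, 0 < cR ∧ ∀ n, 1 ≤ n → ∀ P ∈ Ps n, condStar P R cR := by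
  classical
  refine ⟨ε ^ 2 / 2, by positivity, ?_⟩
  intro n hn P hP
  haveI := hprob n P hP
  haveI : IsProbabilityMeasure (P.prod P) := by infer_instance
  have hπ : (0 : ℝ) < π := Real.pi_pos
  set a : ℝ := cU - cL with ha_def
  have ha : 0 < a := sub_pos.mpr hLU
  set m : ℕ := ⌈R * a / π⌉₊ with hm_def
  set c : ℝ := ((2 * (m : ℝ) + 1) * π) / a with hc_def
  have hc_pos : 0 < c := by positivity
  have hca : c * a = (2 * (m : ℝ) + 1) * π := by
    rw [hc_def, div_mul_cancel₀ _ ha.ne']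
  have hcR : R < c := by
    rw [hc_def, lt_div_iff₀ ha]
    have h1 : R * a / π ≤ (m : ℝ) := Nat.le_ceil _
    have h2 : R * a ≤ (m : ℝ) * π := by
      rwa [div_le_iff₀ hπ] at h1
    nlinarith
  set t₀ : Ed d := EuclideanSpace.single j c with ht₀_def
  have ht₀norm : R < ‖t₀‖ := by
    rw [ht₀_def, EuclideanSpace.norm_single, Real.norm_eq_abs, abs_of_pos hc_pos]
    exact hcR
  -- the atom sets
  have hmeas_eval : Measurable fun x : Ed d => x j := by
    exact (EuclideanSpace.proj j).continuous.measurable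
  set SL : Set (Ed d) := {x : Ed d | x j = cL} with hSL_def
  set SU : Set (Ed d) := {x : Ed d | x j = cU} with hSU_def
  have hSLm : MeasurableSet SL := hmeas_eval (measurableSet_singleton cL)
  have hSUm : MeasurableSet SU := hmeas_eval (measurableSet_singleton cU)
  set S : Set (Ed d × Ed d) := SL ×ˢ SU with hS_def
  have hSm : MeasurableSet S := hSLm.prod hSUm
  have hmeasS : ε ^ 2 < ((P.prod P) S).toReal := by
    rw [hS_def, Measure.prod_prod, ENNReal.toReal_mul]
    have hL := hatomL n hn P hP
    have hU := hatomU n hn P hP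
    calc ε ^ 2 = ε * ε := sq ε
      _ < (P SL).toReal * (P SU).toReal :=
        mul_lt_mul' hL.le hU hε.le (lt_trans hε hL)
  -- the integrand
  set f : Ed d × Ed d → ℝ := fun p => xiFn t₀ p.1 p.2 with hf_def
  have hf_meas : Measurable f := xiFn_measurable' t₀
  have hf_nonneg : ∀ p, 0 ≤ f p := fun p => xiFn_nonneg' t₀ p.1 p.2
  have hf_le : ∀ p, f p ≤ π ^ 2 := fun p => xiFn_le_pi_sq' t₀ p.1 p.2
  have hint : Integrable f (P.prod P) := by
    refine Integrable.mono' (integrable_const (π ^ 2)) hf_meas.aestronglyMeasurable ?_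
    filter_upwards with p
    rw [Real.norm_eq_abs, abs_of_nonneg (hf_nonneg p)]
    exact hf_le p
  -- lower bound on S
  have hf_lb : ∀ p ∈ S, π ^ 2 ≤ f p := by
    rintro ⟨u, v⟩ ⟨hu, hv⟩
    have hinner : (inner ℝ t₀ (u - v) : ℝ) = -((2 * (m : ℝ) + 1) * π) := by
      have h1 : (inner ℝ t₀ (u - v) : ℝ) = c * ((u - v) j) := by
        rw [ht₀_def]
        simpa using EuclideanSpace.inner_single_left (𝕜 := ℝ) j c (u - v)
      have hu' : u j = cL := hu
      have hv' : v j = cU := hv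
      have h2 : (u - v) j = cL - cU := by
        simp only [PiLp.sub_apply]
        rw [hu', hv']
      rw [h1, h2, show cL - cU = -a by rw [ha_def]; ring, mul_neg, hca]
    refine le_ciInf fun q => ?_
    rw [hinner]
    set k : ℤ := 2 * q + 2 * (m : ℤ) + 1 with hk_def
    have hk0 : k ≠ 0 := by omega
    have hk1 : (1 : ℤ) ≤ k ^ 2 := by
      have habs : 1 ≤ |k| := Int.one_le_abs hk0
      nlinarith [sq_abs k]
    have hk1' : (1 : ℝ) ≤ (k : ℝ) ^ 2 := by exact_mod_cast hk1
    have heq : (-((2 * (m : ℝ) + 1) * π) - 2 * π * (q : ℝ)) ^ 2 = π ^ 2 * (k : ℝ) ^ 2 := by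
      rw [hk_def]; push_cast; ring
    rw [heq]
    nlinarith [sq_nonneg (π : ℝ)]
  -- integral lower bound
  have hμS_ne_top : (P.prod P) S ≠ ⊤ := measure_ne_top _ _
  have hlb1 : π ^ 2 * ((P.prod P) S).toReal ≤ ∫ p in S, f p ∂(P.prod P) :=
    setIntegral_ge_of_const_le_real hSm hμS_ne_top hf_lb hint.integrableOn
  have hlb2 : ∫ p in S, f p ∂(P.prod P) ≤ ∫ p, f p ∂(P.prod P) :=
    setIntegral_le_integral hint (Filter.Eventually.of_forall hf_nonneg)
  have hval : ε ^ 2 / 2 ≤ (2 * π ^ 2)⁻¹ * ∫ p : Ed d × Ed d, xiFn t₀ p.1 p.2 ∂(P.prod P) := by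
    have h1 : π ^ 2 * ε ^ 2 ≤ ∫ p, f p ∂(P.prod P) := by
      refine le_trans ?_ (hlb1.trans hlb2)
      exact mul_le_mul_of_nonneg_left hmeasS.le (sq_nonneg π)
    have h2 : (0 : ℝ) < 2 * π ^ 2 := by positivity
    have := mul_le_mul_of_nonneg_left h1 (le_of_lt (inv_pos.mpr h2))
    calc ε ^ 2 / 2 = (2 * π ^ 2)⁻¹ * (π ^ 2 * ε ^ 2) := by field_simp
      _ ≤ (2 * π ^ 2)⁻¹ * ∫ p, f p ∂(P.prod P) := this
  -- conclude via the supremum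
  have hbdd : BddAbove (Set.range fun t : {t : Ed d // R < ‖t‖} =>
      (2 * π ^ 2)⁻¹ * ∫ p : Ed d × Ed d, xiFn t.1 p.1 p.2 ∂(P.prod P)) := by
    refine ⟨(2 * π ^ 2)⁻¹ * π ^ 2, ?_⟩
    rintro r ⟨t, rfl⟩
    exact mul_le_mul_of_nonneg_left (xiFn_integral_le t.1 (P.prod P)) (by positivity)
  exact le_ciSup_of_le hbdd ⟨t₀, ht₀norm⟩ hval
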